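/- The multiplicative autocorrelation of the fractional-part function at 1 satisfies A(1) := ∫_0^∞ {t}² t^{-2} dt = log(2π) − γ. -/

import Mathlib

open MeasureTheory Real Filter Set intervalIntegral Topology

lemma ac_integrable : IntegrableOn (fun t : ℝ => Int.fract t ^ 2 / t ^ 2) (Ioi 0) := by
  have hmeas : Measurable (fun t : ℝ => Int.fract t ^ 2 / t ^ 2) :=
    (measurable_fract.pow_const 2).div (measurable_id.pow_const 2)
  have hfr1 : ∀ t : ℝ, Int.fract t ^ 2 ≤ 1 := by
    intro t
    have h := Int.fract_lt_one t
    have h0 := Int.fract_nonneg t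
    nlinarith
  have h1 : IntegrableOn (fun t : ℝ => Int.fract t ^ 2 / t ^ 2) (Ioc 0 1) := by
    apply Measure.integrableOn_of_bounded (M := 1) (by simp) hmeas.aestronglyMeasurable
    filter_upwards [ae_restrict_mem measurableSet_Ioc] with t ht
    have ht0 : (0:ℝ) < t := ht.1
    have hle : Int.fract t ≤ t := by
      have : (0:ℝ) ≤ (⌊t⌋ : ℝ) := by exact_mod_cast Int.floor_nonneg.2 ht0.le
      nlinarith [Int.self_sub_fract t]
    rw [Real.norm_eq_abs, abs_div, abs_of_nonneg (by positivity), abs_of_nonneg (by positivity),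
      div_le_one (by positivity)]
    have h0 := Int.fract_nonneg t
    nlinarith
  have h2 : IntegrableOn (fun t : ℝ => Int.fract t ^ 2 / t ^ 2) (Ioi 1) := by
    have hg : IntegrableOn (fun t : ℝ => t ^ (-2 : ℝ)) (Ioi 1) :=
      integrableOn_Ioi_rpow_of_lt (by norm_num) one_pos
    apply hg.integrable.mono hmeas.aestronglyMeasurable
    filter_upwards [ae_restrict_mem measurableSet_Ioi] with t ht
    have ht1 : (1:ℝ) < t := ht
    have ht0 : (0:ℝ) < t := by linarith
    have heq : t ^ (-2:ℝ) = 1 / t ^ 2 := by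
      rw [Real.rpow_neg ht0.le, one_div]
      congr 1
      rw [← Real.rpow_natCast t 2]; norm_num
    rw [Real.norm_eq_abs, Real.norm_eq_abs, abs_div, abs_of_nonneg (by positivity),
      abs_of_nonneg (by positivity), abs_of_nonneg (Real.rpow_nonneg ht0.le _), heq]
    gcongr
    exact hfr1 t
  have : Ioi (0:ℝ) = Ioc 0 1 ∪ Ioi 1 := by
    rw [Set.Ioc_union_Ioi_eq_Ioi]; norm_num
  rw [this]
  exact h1.union h2

lemma ac_base : ∫ t in (0:ℝ)..1, Int.fract t ^ 2 / t ^ 2 = 1 := by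
  rw [intervalIntegral.integral_of_le zero_le_one]
  have heq : ∀ᵐ t ∂(volume.restrict (Ioc (0:ℝ) 1)), Int.fract t ^ 2 / t ^ 2 = 1 := by
    have h1 : ∀ᵐ t : ℝ ∂volume, t ≠ 1 := by
      simpa using ae_iff.2 (by simpa using volume_singleton (a := (1:ℝ)))
    filter_upwards [ae_restrict_mem measurableSet_Ioc, ae_restrict_of_ae h1] with t ht ht1
    have ht0 : (0:ℝ) < t := ht.1
    have hlt : t < 1 := lt_of_le_of_ne ht.2 ht1
    rw [Int.fract_eq_self.2 ⟨ht.1.le, hlt⟩, div_self (by positivity)]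
  rw [integral_congr_ae heq]
  simp [Real.volume_Ioc]

lemma ac_step (n : ℕ) : ∫ t in ((n:ℝ)+1)..((n:ℝ)+2), Int.fract t ^ 2 / t ^ 2 =
    1 - 2*((n:ℝ)+1)*(Real.log ((n:ℝ)+2) - Real.log ((n:ℝ)+1)) + ((n:ℝ)+1)/((n:ℝ)+2) := by
  have hle : (n:ℝ)+1 ≤ (n:ℝ)+2 := by linarith
  have hn1 : (0:ℝ) < (n:ℝ)+1 := by positivity
  have hn2 : (0:ℝ) < (n:ℝ)+2 := by positivity
  have hcongr : ∫ t in ((n:ℝ)+1)..((n:ℝ)+2), Int.fract t ^ 2 / t ^ 2 =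
      ∫ t in ((n:ℝ)+1)..((n:ℝ)+2), (t - ((n:ℝ)+1)) ^ 2 / t ^ 2 := by
    apply intervalIntegral.integral_congr_ae
    have h1 : ∀ᵐ t : ℝ ∂volume, t ≠ (n:ℝ)+2 := by
      simpa using ae_iff.2 (by simpa using volume_singleton (a := ((n:ℝ)+2)))
    filter_upwards [h1] with t ht1 ht
    rw [Set.uIoc_of_le hle] at ht
    have hlt : t < (n:ℝ)+2 := lt_of_le_of_ne ht.2 ht1
    have hfr : Int.fract t = t - ((n:ℝ)+1) := by
      have h2 : Int.fract t = Int.fract (t - (((n:ℤ)+1) : ℤ)) := (Int.fract_sub_intCast t ((n:ℤ)+1)).symm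
      rw [h2, Int.fract_eq_self.2 ⟨by push_cast; linarith [ht.1], by push_cast; linarith⟩]
      push_cast; ring
    rw [hfr]
  rw [hcongr]
  have key : ∀ t ∈ Set.uIcc ((n:ℝ)+1) ((n:ℝ)+2),
      HasDerivAt (fun t : ℝ => t - 2*((n:ℝ)+1)*Real.log t - ((n:ℝ)+1)^2/t)
        ((t - ((n:ℝ)+1))^2 / t^2) t := by
    intro t ht
    rw [Set.uIcc_of_le hle] at ht
    have ht0 : (0:ℝ) < t := lt_of_lt_of_le hn1 ht.1
    have h1 := ((hasDerivAt_id t).sub ((Real.hasDerivAt_log ht0.ne').const_mul (2*((n:ℝ)+1)))).sub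
        ((hasDerivAt_const t (((n:ℝ)+1)^2)).div (hasDerivAt_id t) ht0.ne')
    simp only [Pi.sub_def, Pi.div_def, id] at h1
    refine h1.congr_deriv ?_
    field_simp
    ring
  have hcont : ContinuousOn (fun t : ℝ => (t - ((n:ℝ)+1))^2 / t^2) (Set.uIcc ((n:ℝ)+1) ((n:ℝ)+2)) := by
    apply ContinuousOn.div (by fun_prop) (by fun_prop)
    intro t ht
    rw [Set.uIcc_of_le hle] at ht
    have : (0:ℝ) < t := lt_of_lt_of_le hn1 ht.1
    positivity
  rw [intervalIntegral.integral_eq_sub_of_hasDerivAt key hcont.intervalIntegrable]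
  field_simp
  ring

noncomputable def acE (N : ℕ) : ℝ :=
  2*N + 2 - 2*N*Real.log ((N:ℝ)+1) + 2*Real.log (Nat.factorial N) - (harmonic (N+1) : ℝ)

lemma ac_ii (a b : ℝ) (ha : 0 ≤ a) (hb : 0 ≤ b) :
    IntervalIntegrable (fun t : ℝ => Int.fract t ^ 2 / t ^ 2) volume a b := by
  rw [intervalIntegrable_iff]
  apply ac_integrable.mono_set
  intro x hx
  exact lt_of_le_of_lt (le_min ha hb) hx.1

lemma ac_partial (N : ℕ) :
    ∫ t in (0:ℝ)..((N:ℝ)+1), Int.fract t ^ 2 / t ^ 2 = acE N := by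
  induction N with
  | zero =>
    simp only [Nat.cast_zero, zero_add]
    rw [ac_base]
    simp [acE, harmonic_succ]
    norm_num
  | succ n ih =>
    have hadd := intervalIntegral.integral_add_adjacent_intervals
      (ac_ii 0 ((n:ℝ)+1) le_rfl (by positivity)) (ac_ii ((n:ℝ)+1) ((n:ℝ)+2) (by positivity) (by positivity))
      (f := fun t : ℝ => Int.fract t ^ 2 / t ^ 2) (μ := volume)
    have hcast : ((n+1 : ℕ):ℝ) + 1 = (n:ℝ) + 2 := by push_cast; ring
    rw [hcast, ← hadd, ih, ac_step]
    have hfac : Real.log (Nat.factorial (n+1)) = Real.log ((n:ℝ)+1) + Real.log (Nat.factorial n) := by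
      rw [Nat.factorial_succ]
      push_cast
      rw [Real.log_mul (by positivity) (by exact_mod_cast Nat.cast_ne_zero.2 (Nat.factorial_pos n).ne')]
    have hharm : ((harmonic (n+2) : ℚ) : ℝ) = ((harmonic (n+1) : ℚ) : ℝ) + 1/((n:ℝ)+2) := by
      rw [harmonic_succ]
      push_cast
      ring
    simp only [acE, hfac, hharm]
    push_cast
    have h2 : ((n:ℝ)+2) ≠ 0 := by positivity
    field_simp
    ring

lemma ac_limit : Tendsto acE atTop
    (𝓝 (Real.log (2 * Real.pi) - Real.eulerMascheroniConstant)) := by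
  have hstir : Tendsto (fun N : ℕ => 2 * Real.log (Stirling.stirlingSeq N)) atTop
      (𝓝 (Real.log Real.pi)) := by
    have h := (Stirling.tendsto_stirlingSeq_sqrt_pi.log
      (Real.sqrt_pos.2 Real.pi_pos).ne').const_mul 2
    convert h using 2
    rw [Real.log_sqrt Real.pi_pos.le]; ring
  have hlog1 : Tendsto (fun N : ℕ => Real.log (1 + 1/(N:ℝ))) atTop (𝓝 0) := by
    have h : Tendsto (fun N : ℕ => 1 + 1/(N:ℝ)) atTop (𝓝 1) := by
      simpa using (tendsto_one_div_atTop_nhds_zero_nat).const_add (1:ℝ)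
    simpa using h.log one_ne_zero
  have hnlog : Tendsto (fun N : ℕ => (N:ℝ) * Real.log (1 + 1/(N:ℝ))) atTop (𝓝 1) := by
    have h := (Real.tendsto_one_add_div_pow_exp 1).log (Real.exp_ne_zero 1)
    rw [Real.log_exp] at h
    apply h.congr
    intro n
    rw [Real.log_pow]
  have hharm : Tendsto (fun N : ℕ => ((harmonic (N+1) : ℚ) : ℝ) - Real.log ((N:ℝ)+1)) atTop
      (𝓝 Real.eulerMascheroniConstant) := by
    have h := Real.tendsto_harmonic_sub_log.comp (tendsto_add_atTop_nat 1)
    apply h.congr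
    intro n
    simp only [Function.comp_apply]
    push_cast
    ring_nf
  have hcomb : Tendsto (fun N : ℕ => 2 * Real.log (Stirling.stirlingSeq N) + Real.log 2 +
      (2 - 2 * ((N:ℝ) * Real.log (1 + 1/(N:ℝ))))
      - (((harmonic (N+1) : ℚ) : ℝ) - Real.log ((N:ℝ)+1)) - Real.log (1 + 1/(N:ℝ))) atTop
      (𝓝 (Real.log (2 * Real.pi) - Real.eulerMascheroniConstant)) := by
    have := ((((hstir.add (tendsto_const_nhds (x := Real.log 2))).add
      ((tendsto_const_nhds (x := (2:ℝ))).sub (hnlog.const_mul 2))).sub hharm).sub hlog1)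
    convert this using 2
    rw [Real.log_mul two_ne_zero Real.pi_pos.ne']
    ring
  apply hcomb.congr'
  filter_upwards [eventually_ge_atTop 1] with N hN
  have hN0 : (0:ℝ) < (N:ℝ) := by exact_mod_cast hN
  have hsf := Stirling.log_stirlingSeq_formula N
  have hlogdiv : Real.log ((N:ℝ) / Real.exp 1) = Real.log N - 1 := by
    rw [Real.log_div hN0.ne' (Real.exp_ne_zero 1), Real.log_exp]
  have h2N : Real.log (2 * (N:ℝ)) = Real.log 2 + Real.log N := by
    rw [Real.log_mul two_ne_zero hN0.ne']
  have hfrac : Real.log (1 + 1/(N:ℝ)) = Real.log ((N:ℝ)+1) - Real.log N := by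
    rw [← Real.log_div (by positivity) hN0.ne']
    congr 1
    field_simp
  have hfact : 2 * Real.log (Nat.factorial N) =
      2 * Real.log (Stirling.stirlingSeq N) + Real.log (2 * (N:ℝ)) + 2 * (N:ℝ) * Real.log ((N:ℝ) / Real.exp 1) := by
    rw [hsf]; push_cast; ring
  simp only [acE]
  rw [hfact, hlogdiv, h2N, hfrac]
  push_cast
  ring

theorem autocorrelation_at_one :
    ∫ t in Set.Ioi (0 : ℝ), Int.fract t ^ 2 / t ^ 2 =
      Real.log (2 * Real.pi) - Real.eulerMascheroniConstant := by
  have hunion : (⋃ N : ℕ, Ioc (0:ℝ) ((N:ℝ)+1)) = Ioi 0 := by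
    ext x
    simp only [Set.mem_iUnion, Set.mem_Ioc, Set.mem_Ioi]
    constructor
    · rintro ⟨N, hN, _⟩; exact hN
    · intro hx
      obtain ⟨N, hN⟩ := exists_nat_ge x
      exact ⟨N, hx, by linarith⟩
  have hmono : Monotone (fun N : ℕ => Ioc (0:ℝ) ((N:ℝ)+1)) := by
    intro a b hab
    apply Set.Ioc_subset_Ioc_right
    have : (a:ℝ) ≤ b := by exact_mod_cast hab
    linarith
  have h1 := MeasureTheory.tendsto_setIntegral_of_monotone
    (fun N : ℕ => measurableSet_Ioc) hmono (hunion ▸ ac_integrable)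
  rw [hunion] at h1
  have h2 : Tendsto acE atTop (𝓝 (∫ t in Set.Ioi (0:ℝ), Int.fract t ^ 2 / t ^ 2)) := by
    apply h1.congr
    intro N
    rw [← ac_partial N, intervalIntegral.integral_of_le (by positivity)]
  exact tendsto_nhds_unique h2 ac_limit
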